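/- Let k be a commutative ring, G a finite group, and N ◁ G a normal subgroup with [G:N] a unit of k. Then for every ℕ-graded commutative k-algebra A with an action of G by degree-preserving k-algebra automorphisms one has β(A^G) ≤ β_k(G/N)·β(A^N). In particular, if moreover |G| is a unit of k, then β_k(G) ≤ β_k(G/N)·β_k(N). -/

import Mathlib

/-- `beta`: see above. -/
noncomputable def beta {A : Type*} [CommRing A] (𝒜 : ℕ → Set A) (B : Subring A) : ℕ∞ :=
  sInf ((↑) '' {n : ℕ | B ≤ Subring.closure {a : A | a ∈ B ∧ ∃ d ≤ n, a ∈ 𝒜 d}})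

/-- An `ℕ`-graded commutative `k`-algebra equipped with an action of `G` by
degree-preserving `k`-algebra automorphisms. -/
structure GradedAlgebraWithAction (k : Type) [CommRing k] (G : Type) [Group G] :
    Type 1 where
  carrier : Type
  [commRing : CommRing carrier]
  [algebra : Algebra k carrier]
  grading : ℕ → Submodule k carrier
  graded : GradedAlgebra grading
  action : G →* (carrier ≃ₐ[k] carrier)
  degPres : ∀ (g : G) (d : ℕ), ∀ a ∈ grading d, action g a ∈ grading d

attribute [instance] GradedAlgebraWithAction.commRing GradedAlgebraWithAction.algebra

namespace GradedAlgebraWithAction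

variable {k G : Type} [CommRing k] [Group G] (X : GradedAlgebraWithAction k G)

/-- The invariant subring `A^G`. -/
def inv : Subring X.carrier where
  carrier := {a : X.carrier | ∀ g : G, X.action g a = a}
  mul_mem' := by intro a b ha hb g; rw [map_mul, ha g, hb g]
  one_mem' := fun g => map_one (X.action g)
  add_mem' := by intro a b ha hb g; rw [map_add, ha g, hb g]
  zero_mem' := fun g => map_zero (X.action g)
  neg_mem' := by intro a ha g; rw [map_neg, ha g]

/-- The invariant subring fixed by a subgroup `H ≤ G`. -/
def invSub (H : Subgroup G) : Subring X.carrier where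
  carrier := {a : X.carrier | ∀ g ∈ H, X.action g a = a}
  mul_mem' := by intro a b ha hb g hg; rw [map_mul, ha g hg, hb g hg]
  one_mem' := fun g _ => map_one (X.action g)
  add_mem' := by intro a b ha hb g hg; rw [map_add, ha g hg, hb g hg]
  zero_mem' := fun g _ => map_zero (X.action g)
  neg_mem' := by intro a ha g hg; rw [map_neg, ha g hg]

/-- `β(A)` of the underlying graded algebra. -/
noncomputable def betaTop : ℕ∞ := beta (fun d => (X.grading d : Set X.carrier)) ⊤

/-- `β(A^G)` for the induced grading on the invariant ring. -/
noncomputable def betaInv : ℕ∞ := beta (fun d => (X.grading d : Set X.carrier)) X.inv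

end GradedAlgebraWithAction

/-- `β_k(G)`: the supremum of `β(A^G)` over all `ℕ`-graded commutative `k`-algebras `A`
with an action of `G` by degree-preserving `k`-algebra automorphisms and `β(A) ≤ 1`. -/
noncomputable def betaRing (k : Type) [CommRing k] (G : Type) [Group G] : ℕ∞ :=
  ⨆ (X : GradedAlgebraWithAction k G) (_ : X.betaTop ≤ 1), X.betaInv

instance (priority := 900) {k G : Type} [CommRing k] [Group G]
    (X : GradedAlgebraWithAction k G) : GradedAlgebra X.grading := X.graded

/-! ### Auxiliary lemmas about `beta` -/

section BetaLemmas

variable {A : Type*} [CommRing A] (𝒜 : ℕ → Set A) (B : Subring A)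

def betaSet (n : ℕ) : Set A := {a : A | a ∈ B ∧ ∃ d ≤ n, a ∈ 𝒜 d}

lemma beta_def' : beta 𝒜 B = sInf ((↑) '' {n : ℕ | B ≤ Subring.closure (betaSet 𝒜 B n)}) := rfl

lemma betaSet_mono {m n : ℕ} (h : m ≤ n) : betaSet 𝒜 B m ⊆ betaSet 𝒜 B n :=
  fun _ ⟨ha, d, hd, had⟩ => ⟨ha, d, hd.trans h, had⟩

lemma beta_le_of {n : ℕ} (h : B ≤ Subring.closure (betaSet 𝒜 B n)) : beta 𝒜 B ≤ n :=
  sInf_le ⟨n, h, rfl⟩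

lemma beta_le_iff {n : ℕ} : beta 𝒜 B ≤ n ↔ B ≤ Subring.closure (betaSet 𝒜 B n) := by
  refine ⟨fun h => ?_, beta_le_of 𝒜 B⟩
  set T : Set ℕ := {n | B ≤ Subring.closure (betaSet 𝒜 B n)} with hT
  rcases T.eq_empty_or_nonempty with hTe | hTne
  · rw [beta_def', ← hT, hTe, Set.image_empty, sInf_empty, top_le_iff] at h
    exact absurd h (by simp)
  · have hmem : sInf T ∈ T := Nat.sInf_mem hTne
    have hcast : (↑(sInf T) : ℕ∞) = sInf ((↑) '' T) := by
      refine le_antisymm (le_sInf ?_) (sInf_le ⟨_, hmem, rfl⟩)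
      rintro b ⟨m, hm, rfl⟩
      exact Nat.cast_le.2 (Nat.sInf_le hm)
    rw [beta_def', ← hT, ← hcast, Nat.cast_le] at h
    exact le_trans hmem (Subring.closure_mono (betaSet_mono 𝒜 B h))

end BetaLemmas

/-! ### `MvPolynomial` with a permutation action, as a graded algebra with action -/

open MvPolynomial

noncomputable def polyActionHom (k : Type) [CommRing k] (H : Type) [Group H] (S : Type)
    (ρ : H →* Equiv.Perm S) : H →* (MvPolynomial S k ≃ₐ[k] MvPolynomial S k) where
  toFun h := renameEquiv k (ρ h)
  map_one' := by
    apply AlgEquiv.ext; intro p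
    show rename (⇑(ρ 1)) p = p
    rw [map_one]
    exact rename_id_apply p
  map_mul' a b := by
    apply AlgEquiv.ext; intro p
    show rename (⇑(ρ (a * b))) p = _
    rw [map_mul]
    show rename (⇑(ρ a) ∘ ⇑(ρ b)) p = (renameEquiv k (ρ a)) ((renameEquiv k (ρ b)) p)
    simp [rename_rename]

@[simp] lemma polyActionHom_apply (k : Type) [CommRing k] (H : Type) [Group H] (S : Type)
    (ρ : H →* Equiv.Perm S) (h : H) (p : MvPolynomial S k) :
    polyActionHom k H S ρ h p = rename (⇑(ρ h)) p := rfl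

noncomputable def mvPolyGAWA (k : Type) [CommRing k] (H : Type) [Group H] (S : Type)
    (ρ : H →* Equiv.Perm S) : GradedAlgebraWithAction k H where
  carrier := MvPolynomial S k
  grading := homogeneousSubmodule S k
  graded := MvPolynomial.gradedAlgebra
  action := polyActionHom k H S ρ
  degPres := fun h d a ha => by
    rw [mem_homogeneousSubmodule] at ha ⊢
    exact ha.rename_isHomogeneous

/-- A polynomial ring is generated in degrees `≤ 1`. -/
lemma mvPoly_betaTop_le (k : Type) [CommRing k] (H : Type) [Group H] (S : Type)
    (ρ : H →* Equiv.Perm S) : (mvPolyGAWA k H S ρ).betaTop ≤ 1 := by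
  have : ((1 : ℕ) : ℕ∞) = (1 : ℕ∞) := by norm_num
  rw [GradedAlgebraWithAction.betaTop, ← this]
  apply beta_le_of
  intro p _
  induction p using MvPolynomial.induction_on with
  | C a =>
      exact Subring.subset_closure ⟨trivial, 0, Nat.zero_le 1, isHomogeneous_C _ _⟩
  | add p q hp hq => exact add_mem (hp trivial) (hq trivial)
  | mul_X p v hp =>
      exact mul_mem (hp trivial)
        (Subring.subset_closure ⟨trivial, 1, le_refl 1, isHomogeneous_X _ _⟩)

/-! ### degree-zero facts -/

section GradeZero

variable {k A : Type*} [CommRing k] [CommRing A] [Algebra k A]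
  (𝒜 : ℕ → Submodule k A) [SetLike.GradedMonoid 𝒜]

lemma closure_betaSet_zero_le (B : Subring A) :
    Subring.closure (betaSet (fun d => (𝒜 d : Set A)) B 0) ≤ SetLike.GradeZero.subring 𝒜 := by
  apply Subring.closure_le.2
  rintro a ⟨_, d, hd, had⟩
  obtain rfl : d = 0 := Nat.le_zero.1 hd
  exact had

end GradeZero

/-- If `betaRing k H = 0` then `k` is a trivial ring. -/
lemma one_eq_zero_of_betaRing_eq_zero (k : Type) [CommRing k] (H : Type) [Group H]
    (h : betaRing k H = 0) : (1 : k) = 0 := by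
  by_contra h1
  haveI : Nontrivial k := nontrivial_of_ne 1 0 h1
  set W := mvPolyGAWA k H Unit 1 with hW
  have hle : W.betaInv ≤ betaRing k H := le_iSup₂_of_le W (mvPoly_betaTop_le k H Unit 1) le_rfl
  rw [h] at hle
  have h0 : W.betaInv ≤ ((0 : ℕ) : ℕ∞) := by exact_mod_cast hle
  rw [GradedAlgebraWithAction.betaInv, beta_le_iff] at h0
  have hXinv : (X () : MvPolynomial Unit k) ∈ W.inv := by
    intro g
    show rename (⇑((1 : H →* Equiv.Perm Unit) g)) (X () : MvPolynomial Unit k) = X ()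
    rw [rename_X]
  have hX0 := closure_betaSet_zero_le W.grading W.inv (h0 hXinv)
  have : IsHomogeneous (X () : MvPolynomial Unit k) 0 := hX0
  have h10 : (0 : ℕ) = 1 := (this).inj_right (isHomogeneous_X _ _) (X_ne_zero ())
  exact absurd h10 (by norm_num)

namespace GradedAlgebraWithAction

variable {k G : Type} [CommRing k] [Group G]

lemma action_action (X : GradedAlgebraWithAction k G) (g h : G) (a : X.carrier) :
    X.action g (X.action h a) = X.action (g * h) a := by
  rw [map_mul, AlgEquiv.mul_apply]

@[simp] lemma action_one_apply (X : GradedAlgebraWithAction k G) (a : X.carrier) :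
    X.action 1 a = a := by rw [map_one]; rfl

variable (X : GradedAlgebraWithAction k G) (N : Subgroup G) [N.Normal] (m : ℕ)

/-- The generating set: homogeneous elements of `A^N` of degree `≤ m`. -/
def genS : Set X.carrier :=
  betaSet (fun d => (X.grading d : Set X.carrier)) (X.invSub N) m

lemma action_mem_genS (g : G) {a : X.carrier} (ha : a ∈ X.genS N m) :
    X.action g a ∈ X.genS N m := by
  obtain ⟨haB, d, hd, had⟩ := ha
  refine ⟨?_, d, hd, X.degPres g d a had⟩
  intro n hn
  have h1 : (g⁻¹ * n * g) ∈ N := Subgroup.Normal.conj_mem' ‹N.Normal› n hn g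
  calc X.action n (X.action g a) = X.action (n * g) a := X.action_action n g a
    _ = X.action (g * (g⁻¹ * n * g)) a := by group
    _ = X.action g (X.action (g⁻¹ * n * g) a) := (X.action_action _ _ a).symm
    _ = X.action g a := by rw [haB _ h1]

/-- The permutation action of `G` on the generating set. -/
def sPermHom : G →* Equiv.Perm (X.genS N m) where
  toFun g :=
    { toFun := fun a => ⟨X.action g a, X.action_mem_genS N m g a.2⟩
      invFun := fun a => ⟨X.action g⁻¹ a, X.action_mem_genS N m g⁻¹ a.2⟩
      left_inv := fun a => Subtype.ext (by
        show X.action g⁻¹ (X.action g ↑a) = ↑a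
        rw [X.action_action, inv_mul_cancel, X.action_one_apply])
      right_inv := fun a => Subtype.ext (by
        show X.action g (X.action g⁻¹ ↑a) = ↑a
        rw [X.action_action, mul_inv_cancel, X.action_one_apply]) }
  map_one' := Equiv.ext fun a => Subtype.ext (X.action_one_apply a.1)
  map_mul' g h := Equiv.ext fun a => Subtype.ext (X.action_action g h a.1).symm

lemma sPermHom_ker {n : G} (hn : n ∈ N) : X.sPermHom N m n = 1 :=
  Equiv.ext fun a => Subtype.ext (a.2.1 n hn)

/-- The induced permutation action of `G ⧸ N` on the generating set. -/
noncomputable def qPermHom : G ⧸ N →* Equiv.Perm (X.genS N m) :=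
  QuotientGroup.lift N (X.sPermHom N m) fun n hn => X.sPermHom_ker N m hn

@[simp] lemma qPermHom_mk (g : G) (a : X.genS N m) :
    ((X.qPermHom N m (QuotientGroup.mk g)) a : X.carrier) = X.action g a := rfl

/-- The polynomial algebra on the generating set, with the `G ⧸ N` action. -/
noncomputable def polyY : GradedAlgebraWithAction k (G ⧸ N) :=
  mvPolyGAWA k (G ⧸ N) (X.genS N m) (X.qPermHom N m)

lemma polyY_action (q : G ⧸ N) (y : MvPolynomial (X.genS N m) k) :
    (X.polyY N m).action q y = rename (⇑(X.qPermHom N m q)) y := rfl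

/-- Evaluation of the polynomial algebra into `A`. -/
noncomputable def phi : MvPolynomial (X.genS N m) k →ₐ[k] X.carrier :=
  aeval Subtype.val

lemma phi_equivariant (g : G) (y : MvPolynomial (X.genS N m) k) :
    X.phi N m ((X.polyY N m).action (QuotientGroup.mk g) y) = X.action g (X.phi N m y) := by
  have key : (X.phi N m).comp ((X.polyY N m).action (QuotientGroup.mk g)).toAlgHom
      = (X.action g).toAlgHom.comp (X.phi N m) := by
    apply MvPolynomial.algHom_ext
    intro s
    show X.phi N m ((X.polyY N m).action (QuotientGroup.mk g) (MvPolynomial.X s))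
        = X.action g (X.phi N m (MvPolynomial.X s))
    rw [polyY_action, rename_X, phi, aeval_X, aeval_X]
    exact X.qPermHom_mk N m g s
  exact DFunLike.congr_fun key y

lemma mem_phi_range (hm : X.invSub N ≤ Subring.closure (X.genS N m)) {a : X.carrier}
    (ha : a ∈ X.invSub N) : ∃ y, X.phi N m y = a := by
  have hle : Subring.closure (X.genS N m) ≤ ((X.phi N m).range).toSubring := by
    apply Subring.closure_le.2
    intro s hs
    exact ⟨MvPolynomial.X ⟨s, hs⟩, aeval_X _ _⟩
  exact hle (hm ha)

lemma exists_inv_lift [Finite G] (hunit : IsUnit ((N.index : k)))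
    (hm : X.invSub N ≤ Subring.closure (X.genS N m)) {a : X.carrier} (ha : a ∈ X.inv) :
    ∃ y, y ∈ (X.polyY N m).inv ∧ X.phi N m y = a := by
  have haN : a ∈ X.invSub N := fun g _ => ha g
  obtain ⟨y₀, hy₀⟩ := X.mem_phi_range N m hm haN
  haveI : Fintype (G ⧸ N) := Fintype.ofFinite _
  obtain ⟨u, hu⟩ := isUnit_iff_exists_inv.mp hunit
  refine ⟨u • ∑ q : G ⧸ N, (X.polyY N m).action q y₀, ?_, ?_⟩
  · intro q'
    rw [map_smul, map_sum]
    congr 1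
    calc ∑ q : G ⧸ N, (X.polyY N m).action q' ((X.polyY N m).action q y₀)
        = ∑ q : G ⧸ N, (X.polyY N m).action (q' * q) y₀ :=
          Finset.sum_congr rfl fun q _ => (X.polyY N m).action_action q' q y₀
      _ = ∑ q : G ⧸ N, (X.polyY N m).action q y₀ :=
          Equiv.sum_comp (Equiv.mulLeft q') (fun q => (X.polyY N m).action q y₀)
  · erw [map_smul, map_sum]
    rw [Finset.sum_congr rfl fun (q : G ⧸ N) _ => show X.phi N m ((X.polyY N m).action q y₀) = a by
      obtain ⟨g, rfl⟩ := QuotientGroup.mk_surjective q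
      rw [X.phi_equivariant, hy₀, ha g]]
    rw [Finset.sum_const, Finset.card_univ]
    rw [← Nat.cast_smul_eq_nsmul k, smul_smul]
    have hcard : ((Fintype.card (G ⧸ N) : ℕ) : k) = (N.index : k) := by
      rw [Subgroup.index, Nat.card_eq_fintype_card]
    rw [hcard, mul_comm, hu, one_smul]

/-- The submodule of elements of degree at most `D`. -/
def Mle (D : ℕ) : Submodule k X.carrier := ⨆ d : {d : ℕ // d ≤ D}, X.grading d

lemma phi_homog_mem {e : ℕ} {y : MvPolynomial (X.genS N m) k}
    (hy : y.IsHomogeneous e) : X.phi N m y ∈ X.Mle (e * m) := by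
  have hrw : X.phi N m y = ∑ s ∈ y.support, X.phi N m (monomial s (coeff s y)) := by
    rw [← map_sum, support_sum_monomial_coeff]
  rw [hrw]
  apply Submodule.sum_mem
  intro s hs
  have hcs : coeff s y ≠ 0 := mem_support_iff.mp hs
  have hdv : ∀ v : X.genS N m, ∃ d ≤ m, (v : X.carrier) ∈ X.grading d := fun v => v.2.2
  choose dv hdvle hdvmem using hdv
  have hprod : (s.prod fun v n => (v : X.carrier) ^ n)
      ∈ X.grading (∑ v ∈ s.support, s v • dv v) := by
    rw [Finsupp.prod]
    exact SetLike.prod_pow_mem_graded X.grading dv (fun v => (v : X.carrier))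
      (fun v => s v) (fun v _ => hdvmem v)
  have hsle : (∑ v ∈ s.support, s v • dv v) ≤ e * m := by
    calc (∑ v ∈ s.support, s v • dv v) ≤ ∑ v ∈ s.support, s v * m := by
          refine Finset.sum_le_sum fun v _ => ?_
          rw [smul_eq_mul]
          exact Nat.mul_le_mul_left (s v) (hdvle v)
      _ = (∑ v ∈ s.support, s v) * m := (Finset.sum_mul _ _ _).symm
      _ = e * m := by
          have hdeg : s.degree = e := by
            rw [Finsupp.degree_eq_weight_one]
            exact hy hcs
          have : (∑ v ∈ s.support, s v) = s.degree := rfl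
          rw [this, hdeg]
  have hmono : X.phi N m (monomial s (coeff s y))
      = (coeff s y) • (s.prod fun v n => (v : X.carrier) ^ n) := by
    show aeval (Subtype.val) (monomial s (coeff s y)) = _
    rw [aeval_monomial, Algebra.smul_def]
  rw [hmono]
  exact Submodule.mem_iSup_of_mem ⟨_, hsle⟩ (Submodule.smul_mem _ _ hprod)

lemma decompose_action (g : G) (a : X.carrier) (d : ℕ) :
    (DirectSum.decompose X.grading (X.action g a) d : X.carrier)
      = X.action g (DirectSum.decompose X.grading a d : X.carrier) := by
  refine DirectSum.Decomposition.inductionOn X.grading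
    (motive := fun b => (DirectSum.decompose X.grading (X.action g b) d : X.carrier)
      = X.action g (DirectSum.decompose X.grading b d : X.carrier)) ?_ ?_ ?_ a
  · simp
  · intro i x
    by_cases hid : i = d
    · subst hid
      rw [DirectSum.decompose_of_mem_same X.grading x.2,
        DirectSum.decompose_of_mem_same X.grading (X.degPres g i x x.2)]
    · rw [DirectSum.decompose_of_mem_ne X.grading x.2 hid,
        DirectSum.decompose_of_mem_ne X.grading (X.degPres g i x x.2) hid, map_zero]
  · intro b c hb hc
    rw [map_add, DirectSum.decompose_add, DirectSum.decompose_add, DirectSum.add_apply,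
      DirectSum.add_apply, Submodule.coe_add, Submodule.coe_add, map_add, hb, hc]

lemma decompose_mem_inv {a : X.carrier} (ha : a ∈ X.inv) (d : ℕ) :
    (DirectSum.decompose X.grading a d : X.carrier) ∈ X.inv := by
  intro g
  rw [← X.decompose_action g a d, ha g]

lemma decompose_eq_zero_of_mem_Mle {D : ℕ} {a : X.carrier} (ha : a ∈ X.Mle D) {d : ℕ}
    (hD : D < d) : (DirectSum.decompose X.grading a d : X.carrier) = 0 := by
  refine Submodule.iSup_induction (fun i : {d' : ℕ // d' ≤ D} => X.grading i)
    (motive := fun a => (DirectSum.decompose X.grading a d : X.carrier) = 0) ha ?_ ?_ ?_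
  · rintro ⟨i, hi⟩ x hx
    exact DirectSum.decompose_of_mem_ne X.grading hx (by omega : i ≠ d)
  · simp
  · intro x y hx hy
    rw [DirectSum.decompose_add, DirectSum.add_apply, Submodule.coe_add, hx, hy, add_zero]

lemma key [Finite G] (hunit : IsUnit ((N.index : k))) {n : ℕ}
    (hn : (X.polyY N m).inv ≤ Subring.closure
      (betaSet (fun d => ((X.polyY N m).grading d : Set (X.polyY N m).carrier))
        (X.polyY N m).inv n))
    (hm : X.invSub N ≤ Subring.closure (X.genS N m)) :
    X.inv ≤ Subring.closure
      (betaSet (fun d => (X.grading d : Set X.carrier)) X.inv (n * m)) := by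
  classical
  intro a ha
  obtain ⟨y, hyInv, hya⟩ := X.exists_inv_lift N m hunit hm ha
  have hmem : X.phi N m y ∈ (Subring.closure
      (betaSet (fun d => ((X.polyY N m).grading d : Set (X.polyY N m).carrier))
        (X.polyY N m).inv n)).map ((X.phi N m : MvPolynomial (X.genS N m) k →+* X.carrier)) :=
    Subring.mem_map.2 ⟨y, hn hyInv, rfl⟩
  erw [RingHom.map_closure] at hmem
  rw [← hya]
  refine Subring.closure_le.2 ?_ hmem
  rintro z ⟨w, ⟨hwInv, e, he, hwe⟩, rfl⟩
  have hzInv : X.phi N m w ∈ X.inv := by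
    intro g
    rw [← X.phi_equivariant, hwInv (QuotientGroup.mk g)]
  have hwe' : (w : MvPolynomial (X.genS N m) k).IsHomogeneous e := hwe
  have hzM : X.phi N m w ∈ X.Mle (e * m) := X.phi_homog_mem N m hwe'
  have hzsum := DirectSum.sum_support_decompose X.grading (X.phi N m w)
  rw [show ((X.phi N m : MvPolynomial (X.genS N m) k →+* X.carrier) w) = X.phi N m w from rfl,
    ← hzsum]
  apply Subring.sum_mem
  intro d _
  by_cases hdn : d ≤ n * m
  · exact Subring.subset_closure
      ⟨X.decompose_mem_inv hzInv d, d, hdn, (DirectSum.decompose X.grading (X.phi N m w) d).2⟩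
  · push_neg at hdn
    have hem : e * m ≤ n * m := Nat.mul_le_mul_right m he
    have h0 : (DirectSum.decompose X.grading (X.phi N m w) d : X.carrier) = 0 :=
      X.decompose_eq_zero_of_mem_Mle hzM (lt_of_le_of_lt hem hdn)
    rw [h0]
    exact Subring.zero_mem _

/-- Restriction of the action to a subgroup. -/
def res (N : Subgroup G) : GradedAlgebraWithAction k N where
  carrier := X.carrier
  grading := X.grading
  graded := X.graded
  action := X.action.comp N.subtype
  degPres := fun g d a ha => X.degPres g d a ha

lemma res_inv : (X.res N).inv = X.invSub N := by
  ext a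
  constructor
  · intro h g hg; exact h ⟨g, hg⟩
  · intro h g; exact h g g.2

end GradedAlgebraWithAction

/-- Let `k` be a commutative ring, `G` a finite group, and `N ◁ G`
a normal subgroup with `[G:N]` a unit of `k`.  Then for every `ℕ`-graded commutative
`k`-algebra `A` with an action of `G` by degree-preserving `k`-algebra automorphisms
one has `β(A^G) ≤ β_k(G/N) ⬝ β(A^N)` (where `A^N` carries the induced grading and the
induced action of `G/N`).  In particular, if moreover `|G|` is a unit of `k`, then
`β_k(G) ≤ β_k(G/N) ⬝ β_k(N)`. -/
theorem betaInv_le_betaRing_quotient_mul (k G : Type) [CommRing k] [Group G] [Finite G]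
    (N : Subgroup G) [N.Normal] (hunit : IsUnit ((N.index : k))) :
    (∀ X : GradedAlgebraWithAction k G,
        X.betaInv ≤ betaRing k (G ⧸ N) *
          beta (fun d => (X.grading d : Set X.carrier)) (X.invSub N)) ∧
      (IsUnit ((Nat.card G : k)) → betaRing k G ≤ betaRing k (G ⧸ N) * betaRing k N) := by
  have main : ∀ X : GradedAlgebraWithAction k G,
      X.betaInv ≤ betaRing k (G ⧸ N) *
        beta (fun d => (X.grading d : Set X.carrier)) (X.invSub N) := by
    intro X
    set t := beta (fun d => (X.grading d : Set X.carrier)) (X.invSub N) with ht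
    set r := betaRing k (G ⧸ N) with hr
    rcases eq_or_ne t 0 with ht0 | htne0
    · -- `A^N` lies in degree 0, hence so does `A^G`
      rw [ht0, mul_zero]
      have h0 : beta (fun d => (X.grading d : Set X.carrier)) (X.invSub N) ≤ ((0 : ℕ) : ℕ∞) := by
        rw [← ht, ht0]; norm_num
      rw [beta_le_iff] at h0
      have hsub : (X.invSub N : Set X.carrier) ⊆ (SetLike.GradeZero.subring X.grading : Set _) :=
        fun a ha => closure_betaSet_zero_le X.grading _ (h0 ha)
      have hb : X.betaInv ≤ ((0 : ℕ) : ℕ∞) := by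
        rw [GradedAlgebraWithAction.betaInv, beta_le_iff]
        intro a ha
        have haN : a ∈ X.invSub N := fun g _ => ha g
        exact Subring.subset_closure ⟨ha, 0, le_refl 0, hsub haN⟩
      simpa using hb
    rcases eq_or_ne t ⊤ with httop | htfin
    · rcases eq_or_ne r 0 with hr0 | hrne
      · have h1 : (1 : k) = 0 := one_eq_zero_of_betaRing_eq_zero k (G ⧸ N) hr0
        have h1A : (1 : X.carrier) = 0 := by
          have hmap := map_one (algebraMap k X.carrier)
          rw [← hmap, h1, map_zero]
        rw [hr0, zero_mul]
        have hb : X.betaInv ≤ ((0 : ℕ) : ℕ∞) := by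
          rw [GradedAlgebraWithAction.betaInv, beta_le_iff]
          intro a _
          have ha0 : a = 0 := by
            calc a = a * 1 := (mul_one a).symm
              _ = 0 := by rw [h1A, mul_zero]
          rw [ha0]
          exact Subring.zero_mem _
        simpa using hb
      · rw [httop, ENat.mul_top hrne]
        exact le_top
    · obtain ⟨m, hmeq0⟩ := WithTop.ne_top_iff_exists.1 htfin
      have hmeq : ((m : ℕ) : ℕ∞) = t := by exact_mod_cast hmeq0
      have hmne0 : m ≠ 0 := by
        intro h0
        apply htne0
        rw [← hmeq, h0]
        norm_num
      have hmgen : X.invSub N ≤ Subring.closure (X.genS N m) := by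
        rw [show X.genS N m
            = betaSet (fun d => (X.grading d : Set X.carrier)) (X.invSub N) m from rfl,
          ← beta_le_iff, ← ht, ← hmeq]
      have hYtop : (X.polyY N m).betaTop ≤ 1 :=
        mvPoly_betaTop_le k (G ⧸ N) (X.genS N m) (X.qPermHom N m)
      have hYr : (X.polyY N m).betaInv ≤ r := le_iSup₂_of_le (X.polyY N m) hYtop le_rfl
      rcases eq_or_ne (X.polyY N m).betaInv ⊤ with hbtop | hbfin
      · have hrtop : r = ⊤ := top_le_iff.1 (hbtop ▸ hYr)
        rw [hrtop, ← hmeq, ENat.top_mul (Nat.cast_ne_zero.2 hmne0)]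
        exact le_top
      · obtain ⟨nY, hnY0⟩ := WithTop.ne_top_iff_exists.1 hbfin
        have hnY : ((nY : ℕ) : ℕ∞) = (X.polyY N m).betaInv := by exact_mod_cast hnY0
        have hngen : (X.polyY N m).inv ≤ Subring.closure
            (betaSet (fun d => ((X.polyY N m).grading d : Set (X.polyY N m).carrier))
              (X.polyY N m).inv nY) := by
          rw [← beta_le_iff]
          exact le_of_eq hnY.symm
        have hkey := X.key N m hunit hngen hmgen
        have hb : X.betaInv ≤ ((nY * m : ℕ) : ℕ∞) := by
          rw [GradedAlgebraWithAction.betaInv, beta_le_iff]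
          exact hkey
        calc X.betaInv ≤ ((nY * m : ℕ) : ℕ∞) := hb
          _ = (nY : ℕ∞) * (m : ℕ∞) := by push_cast; rfl
          _ ≤ r * t := by
              rw [← hmeq, hnY]
              exact mul_le_mul_left hYr _
  refine ⟨main, fun _ => ?_⟩
  apply iSup₂_le
  intro X hX
  refine (main X).trans (mul_le_mul_right ?_ _)
  have heq : beta (fun d => (X.grading d : Set X.carrier)) (X.invSub N) = (X.res N).betaInv := by
    rw [GradedAlgebraWithAction.betaInv, X.res_inv N]
    rfl
  rw [heq]
  exact le_iSup₂_of_le (X.res N) hX le_rfl
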